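/- If φ is a fuzzy simulation between fuzzy automata A and A', then ‖φ‖ ≤ S(L(A), L(A')), i.e., the norm of φ is at most the degree to which the fuzzy language recognized by A is a subset of the fuzzy language recognized by A'. -/
import Mathlib


/-- A complete residuated lattice: a complete lattice with a commutative monoid
structure whose unit is the top element, together with a residuum `himp`
satisfying the adjointness property. -/
class CompleteResiduatedLattice (L : Type*) extends CompleteLattice L, CommMonoid L where
  himp : L → L → L
  adjoint : ∀ a b c : L, a * b ≤ c ↔ a ≤ himp b c
  one_eq_top : (1 : L) = ⊤

open CompleteResiduatedLattice

variable {L : Type*} [CompleteResiduatedLattice L]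

/-- Sup-⊗ composition of fuzzy relations. -/
def relComp {X Y Z : Type*} (φ : X → Y → L) (ψ : Y → Z → L) : X → Z → L :=
  fun x z => ⨆ y, φ x y * ψ y z

/-- Composition of a fuzzy relation with a fuzzy set. -/
def relSet {X Y : Type*} (φ : X → Y → L) (g : Y → L) : X → L :=
  fun x => ⨆ y, φ x y * g y

/-- Composition of a fuzzy set with a fuzzy relation. -/
def setRel {X Y : Type*} (f : X → L) (φ : X → Y → L) : Y → L :=
  fun y => ⨆ x, f x * φ x y

/-- The converse of a fuzzy relation. -/
def conv {X Y : Type*} (φ : X → Y → L) : Y → X → L := fun y x => φ x y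

/-- The fuzzy degree of inclusion of fuzzy sets. -/
def fuzS {X : Type*} (f g : X → L) : L := ⨅ x, himp (f x) (g x)

/-- The fuzzy degree of equality of fuzzy sets. -/
def fuzE {X : Type*} (f g : X → L) : L := ⨅ x, himp (f x) (g x) ⊓ himp (g x) (f x)

/-- A fuzzy automaton over the alphabet `Sig` with state set `A`. -/
structure FuzzyAutomaton (L : Type*) (Sig : Type*) (A : Type*) where
  δ : A → Sig → A → L
  σ : A → L
  τ : A → L

variable {Sig : Type*}

/-- A fuzzy simulation between two fuzzy automata. -/
def IsFuzzySimulation {A A' : Type*} (M : FuzzyAutomaton L Sig A)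
    (M' : FuzzyAutomaton L Sig A') (φ : A → A' → L) : Prop :=
  (∀ s, relComp (conv φ) (fun x y => M.δ x s y) ≤
        relComp (fun x' y' => M'.δ x' s y') (conv φ)) ∧
  relSet (conv φ) M.τ ≤ M'.τ

/-- The norm of a fuzzy simulation: `S(σ^A, σ^{A'} ∘ φ⁻¹)`. -/
def simNorm {A A' : Type*} (M : FuzzyAutomaton L Sig A)
    (M' : FuzzyAutomaton L Sig A') (φ : A → A' → L) : L :=
  fuzS M.σ (setRel M'.σ (conv φ))

/-- A fuzzy bisimulation between two fuzzy automata. -/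
def IsFuzzyBisimulation {A A' : Type*} (M : FuzzyAutomaton L Sig A)
    (M' : FuzzyAutomaton L Sig A') (φ : A → A' → L) : Prop :=
  IsFuzzySimulation M M' φ ∧ IsFuzzySimulation M' M (conv φ)

/-- The norm of a fuzzy bisimulation. -/
def bisimNorm {A A' : Type*} (M : FuzzyAutomaton L Sig A)
    (M' : FuzzyAutomaton L Sig A') (φ : A → A' → L) : L :=
  simNorm M M' φ ⊓ simNorm M' M (conv φ)

/-- The fuzzy language recognized from a given state:
`L(A,x)(s₁…sₙ) = (δ_{s₁} ∘ … ∘ δ_{sₙ} ∘ τ)(x)`. -/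
def langFrom {A : Type*} (M : FuzzyAutomaton L Sig A) : A → List Sig → L
  | x, [] => M.τ x
  | x, s :: w => ⨆ y, M.δ x s y * langFrom M y w

/-- The fuzzy language recognized by a fuzzy automaton. -/
def lang {A : Type*} (M : FuzzyAutomaton L Sig A) (w : List Sig) : L :=
  ⨆ x, M.σ x * langFrom M x w


lemma crl_mul_mono_left {a b c : L} (h : a ≤ b) : a * c ≤ b * c := by
  rw [adjoint]
  exact h.trans ((adjoint b c (b * c)).1 le_rfl)

lemma crl_mul_mono_right {a b c : L} (h : a ≤ b) : c * a ≤ c * b := by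
  rw [mul_comm c a, mul_comm c b]; exact crl_mul_mono_left h

lemma crl_iSup_mul {ι : Sort*} (f : ι → L) (a : L) :
    (⨆ i, f i) * a = ⨆ i, f i * a := by
  apply le_antisymm
  · rw [adjoint]
    exact iSup_le fun i => (adjoint _ _ _).1 (le_iSup (fun i => f i * a) i)
  · exact iSup_le fun i => crl_mul_mono_left (le_iSup f i)

lemma crl_mul_iSup {ι : Sort*} (a : L) (f : ι → L) :
    a * (⨆ i, f i) = ⨆ i, a * f i := by
  rw [mul_comm, crl_iSup_mul]; simp [mul_comm]

lemma key_lemma {A A' : Type*} (M : FuzzyAutomaton L Sig A)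
    (M' : FuzzyAutomaton L Sig A') (φ : A → A' → L)
    (hφ : IsFuzzySimulation M M' φ) (w : List Sig) (x' : A') :
    (⨆ x, φ x x' * langFrom M x w) ≤ langFrom M' x' w := by
  induction w generalizing x' with
  | nil => exact hφ.2 x'
  | cons s w ih =>
    simp only [langFrom]
    calc (⨆ x, φ x x' * ⨆ y, M.δ x s y * langFrom M y w)
        = ⨆ x, ⨆ y, (φ x x' * M.δ x s y) * langFrom M y w := by
          simp only [crl_mul_iSup, mul_assoc]
      _ = ⨆ y, (⨆ x, φ x x' * M.δ x s y) * langFrom M y w := by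
          rw [iSup_comm]; simp only [crl_iSup_mul]
      _ ≤ ⨆ y, (⨆ y', M'.δ x' s y' * φ y y') * langFrom M y w := by
          exact iSup_mono fun y => crl_mul_mono_left (hφ.1 s x' y)
      _ = ⨆ y', M'.δ x' s y' * ⨆ y, φ y y' * langFrom M y w := by
          simp only [crl_iSup_mul, crl_mul_iSup, mul_assoc]
          rw [iSup_comm]
      _ ≤ ⨆ y', M'.δ x' s y' * langFrom M' y' w :=
          iSup_mono fun y' => crl_mul_mono_right (ih y')

theorem stmt14 {A A' : Type*} [Nonempty A] [Nonempty A']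
    (M : FuzzyAutomaton L Sig A) (M' : FuzzyAutomaton L Sig A')
    (φ : A → A' → L) (hφ : IsFuzzySimulation M M' φ) :
    simNorm M M' φ ≤ fuzS (lang M) (lang M') := by
  apply le_iInf; intro w
  rw [← adjoint]
  calc simNorm M M' φ * lang M w
      = ⨆ x, (simNorm M M' φ * M.σ x) * langFrom M x w := by
        simp only [lang, crl_mul_iSup, mul_assoc]
    _ ≤ ⨆ x, (⨆ x', M'.σ x' * φ x x') * langFrom M x w := by
        refine iSup_mono fun x => crl_mul_mono_left ?_
        exact (adjoint _ _ _).2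
          (iInf_le (fun x => himp (M.σ x) (setRel M'.σ (conv φ) x)) x)
    _ = ⨆ x', M'.σ x' * ⨆ x, φ x x' * langFrom M x w := by
        simp only [crl_iSup_mul, mul_assoc]
        rw [iSup_comm]
        exact iSup_congr fun x' => (crl_mul_iSup _ _).symm
    _ ≤ ⨆ x', M'.σ x' * langFrom M' x' w :=
        iSup_mono fun x' => crl_mul_mono_right (key_lemma M M' φ hφ w x')
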